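/- The function g(θ) = 8θ²/cosh²θ on (0,∞) attains a maximum value λ_c; for every λ with 0 < λ < λ_c the equation g(θ) = λ has at least two distinct positive solutions θ, and for λ > λ_c it has no solution. -/

import Mathlib

open Real Set

private lemma bratu_tail {θ : ℝ} (hθ : 0 < θ) :
    8 * θ^2 / (Real.cosh θ)^2 ≤ 24 / θ := by
  have h1 : (2*θ) ^ 3 / 6 ≤ Real.exp (2*θ) := by
    simpa [Nat.factorial] using Real.pow_div_factorial_le_exp (2*θ) (by linarith) 3
  have h1' : Real.exp (2*θ) = Real.exp θ ^ 2 := by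
    rw [two_mul, Real.exp_add, sq]
  have h2 : Real.exp θ / 2 ≤ Real.cosh θ := by
    have := Real.exp_pos (-θ)
    rw [Real.cosh_eq]; linarith
  have hc := Real.cosh_pos θ
  rw [div_le_div_iff₀ (by positivity) hθ]
  nlinarith [Real.exp_pos θ, sq_nonneg (Real.cosh θ - Real.exp θ / 2)]

theorem bratu_bifurcation_curve (g : ℝ → ℝ)
    (hg : ∀ θ, g θ = 8 * θ^2 / (Real.cosh θ)^2) :
    ∃ lamc : ℝ,
      (∃ θ > (0:ℝ), g θ = lamc) ∧
      (∀ θ > (0:ℝ), g θ ≤ lamc) ∧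
      (∀ lam : ℝ, 0 < lam → lam < lamc →
        ∃ θ₁ θ₂ : ℝ, 0 < θ₁ ∧ 0 < θ₂ ∧ θ₁ ≠ θ₂ ∧ g θ₁ = lam ∧ g θ₂ = lam) ∧
      (∀ lam : ℝ, lamc < lam → ¬∃ θ > (0:ℝ), g θ = lam) := by
  have hG : g = fun θ => 8 * θ^2 / (Real.cosh θ)^2 := funext hg
  have hcont : Continuous g := by
    rw [hG]
    exact (by continuity : Continuous fun θ : ℝ => 8 * θ^2).div
      (by continuity) (fun x => by positivity)
  have hg0 : g 0 = 0 := by rw [hg]; simp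
  -- g 1 > 1
  have hcosh1 : Real.cosh 1 < 2 := by
    have h1 : Real.exp 1 < 2.7182818286 := Real.exp_one_lt_d9
    have h2 : (1:ℝ) < Real.exp 1 := by
      have := Real.add_one_le_exp (1:ℝ); linarith
    have h3 : Real.exp (-1 : ℝ) < 1 := by
      rw [Real.exp_lt_one_iff]; norm_num
    rw [Real.cosh_eq]; linarith
  have hg1 : 1 < g 1 := by
    rw [hg]
    have hc := Real.cosh_pos 1
    rw [lt_div_iff₀ (by positivity)]
    nlinarith
  -- max on [0,24]
  obtain ⟨θ₀, hθ₀mem, hθ₀max⟩ :=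
    (isCompact_Icc : IsCompact (Icc (0:ℝ) 24)).exists_isMaxOn
      ⟨0, by norm_num⟩ hcont.continuousOn
  set lamc := g θ₀ with hlamc
  have h1mem : (1:ℝ) ∈ Icc (0:ℝ) 24 := by norm_num
  have hlam1 : 1 < lamc := lt_of_lt_of_le hg1 (hθ₀max h1mem)
  have hθ₀pos : 0 < θ₀ := by
    rcases lt_or_eq_of_le hθ₀mem.1 with h | h
    · exact h
    · exfalso; rw [hlamc, ← h, hg0] at hlam1; linarith
  -- global bound
  have hbound : ∀ θ > (0:ℝ), g θ ≤ lamc := by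
    intro θ hθ
    by_cases hθ24 : θ ≤ 24
    · exact hθ₀max ⟨hθ.le, hθ24⟩
    · push_neg at hθ24
      have := bratu_tail hθ
      have h24 : 24 / θ ≤ 1 := by
        rw [div_le_one (by linarith)]; linarith
      rw [hg]; linarith
  refine ⟨lamc, ⟨θ₀, hθ₀pos, rfl⟩, hbound, ?_, ?_⟩
  · intro lam hlam hlamlt
    -- left solution on [0, θ₀]
    have hIVT1 : lam ∈ g '' Icc 0 θ₀ := by
      apply intermediate_value_Icc hθ₀pos.le hcont.continuousOn
      rw [hg0]; exact ⟨hlam.le, hlamlt.le⟩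
    obtain ⟨θ₁, hθ₁mem, hθ₁⟩ := hIVT1
    have hθ₁pos : 0 < θ₁ := by
      rcases lt_or_eq_of_le hθ₁mem.1 with h | h
      · exact h
      · exfalso; rw [← h, hg0] at hθ₁; linarith
    have hθ₁ne : θ₁ ≠ θ₀ := by
      intro h; rw [h] at hθ₁; rw [← hθ₁] at hlamlt; exact lt_irrefl _ hlamlt
    -- right solution on [θ₀, T]
    set T : ℝ := max θ₀ (24 / lam + 24) with hT
    have hTθ₀ : θ₀ ≤ T := le_max_left _ _
    have hTpos : 0 < T := lt_of_lt_of_le hθ₀pos hTθ₀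
    have hgT : g T ≤ lam := by
      have h1 := bratu_tail hTpos
      have h2 : 24 / lam + 24 ≤ T := le_max_right _ _
      have h3 : 24 / T ≤ lam := by
        rw [div_le_iff₀ hTpos]
        have h4 : 24 / lam * lam = 24 := by field_simp
        nlinarith [mul_le_mul_of_nonneg_right h2 hlam.le]
      rw [hg]; linarith
    have hIVT2 : lam ∈ g '' Icc θ₀ T := by
      apply intermediate_value_Icc' hTθ₀ hcont.continuousOn
      exact ⟨hgT, hlamlt.le⟩
    obtain ⟨θ₂, hθ₂mem, hθ₂⟩ := hIVT2
    have hθ₂ne : θ₀ ≠ θ₂ := by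
      intro h; rw [← h] at hθ₂; rw [← hθ₂] at hlamlt; exact lt_irrefl _ hlamlt
    have hθ₂gt : θ₀ < θ₂ := lt_of_le_of_ne hθ₂mem.1 hθ₂ne
    exact ⟨θ₁, θ₂, hθ₁pos, lt_trans hθ₀pos hθ₂gt,
      ne_of_lt (lt_of_le_of_lt hθ₁mem.2 hθ₂gt),
      hθ₁, hθ₂⟩
  · rintro lam hlt ⟨θ, hθ, hgθ⟩
    have := hbound θ hθ
    rw [hgθ] at this; linarith
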